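/- Let γ ∈ ⟨ψ₁,ψ₃⟩ be a morphism such that γ(0) ends in the letter 0 and γ(1) ends in the letter 1. Let u be γ(0) with its last letter removed, and let Ψ be a morphism satisfying γ(a)·u = u·Ψ(a) for both letters a ∈ {0,1}. Let E be the exchange morphism (E(0) = 1, E(1) = 0), let u' be (E∘γ∘E)(0) with its last letter removed, and let Ψ' be a morphism satisfying (E∘γ∘E)(a)·u' = u'·Ψ'(a) for both letters a ∈ {0,1}. Then Ψ' = E∘Ψ̃∘E, where Ψ̃ is the time reversal of Ψ, i.e., the morphism with Ψ̃(0) = reverse(Ψ(0)) and Ψ̃(1) = reverse(Ψ(1)). -/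

import Mathlib

/-- A morphism of the free monoid `{0,1}*`, determined by the images of the two
letters (`false` encodes the letter 0, `true` encodes the letter 1). -/
abbrev Morph := Bool → List Bool

/-- The identity morphism. -/
def idm : Morph := fun a => [a]

/-- Composition of morphisms: `(M σ τ)(a) = σ(τ(a))`. -/
def M (σ τ : Morph) : Morph := fun a => (τ a).flatMap σ

/-- `compAll g [i₁, …, iₙ] = g i₁ ∘ g i₂ ∘ ⋯ ∘ g iₙ` (the identity for `n = 0`). -/
def compAll (g : Bool → Morph) (l : List Bool) : Morph :=
  l.foldr (fun i acc => M (g i) acc) idm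

/-- Iterated composition of a morphism with itself. -/
def mpow (σ : Morph) : ℕ → Morph
  | 0 => idm
  | k + 1 => M σ (mpow σ k)

/-- The length-`n` prefix of an infinite word. -/
def wpref (w : ℕ → Bool) (n : ℕ) : List Bool := (List.range n).map w

/-- `σ` fixes the infinite word `w`: for every `n`, the finite word
`σ(w(0))σ(w(1))⋯σ(w(n-1))` is a prefix of `w`. -/
def Fixes (σ : Morph) (w : ℕ → Bool) : Prop :=
  ∀ n : ℕ, (wpref w n).flatMap σ = wpref w ((wpref w n).flatMap σ).length

/-- The integer value `⌊(n+1)α + ρ⌋ - ⌊nα + ρ⌋` of the Sturmian word `s_{α,ρ}`. -/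
noncomputable def sfl (α ρ : ℝ) (n : ℕ) : ℤ :=
  ⌊((n : ℝ) + 1) * α + ρ⌋ - ⌊(n : ℝ) * α + ρ⌋

/-- The integer value `⌈(n+1)α + ρ⌉ - ⌈nα + ρ⌉` of the Sturmian word `s'_{α,ρ}`. -/
noncomputable def scl (α ρ : ℝ) (n : ℕ) : ℤ :=
  ⌈((n : ℝ) + 1) * α + ρ⌉ - ⌈(n : ℝ) * α + ρ⌉

/-- The Sturmian word `s_{α,ρ}` as an infinite binary word. -/
noncomputable def sw (α ρ : ℝ) : ℕ → Bool := fun n => decide (sfl α ρ n = 1)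

/-- The Sturmian word `s'_{α,ρ}` as an infinite binary word. -/
noncomputable def sw' (α ρ : ℝ) : ℕ → Bool := fun n => decide (scl α ρ n = 1)

/-- The characteristic word `c_α = s_{α,α}`. -/
noncomputable def cw (α : ℝ) : ℕ → Bool := sw α α

/-- `ψ₁ : 0 → 01, 1 → 0` (the Fibonacci morphism, `φ₁`). -/
def psi1 : Morph := fun a => match a with | false => [false, true] | true => [false]

/-- `ψ₃ : 0 → 0, 1 → 01` (the morphism `G`, i.e. `φ₀`). -/
def psi3 : Morph := fun a => match a with | false => [false] | true => [false, true]

/-- `ψ₄ : 0 → 0, 1 → 10`. -/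
def psi4 : Morph := fun a => match a with | false => [false] | true => [true, false]

/-- `ψ₇ : 0 → 10, 1 → 1`. -/
def psi7 : Morph := fun a => match a with | false => [true, false] | true => [true]

/-- `ψ₈ : 0 → 01, 1 → 1`. -/
def psi8 : Morph := fun a => match a with | false => [false, true] | true => [true]

/-- Time reversal of a morphism. -/
def trev (σ : Morph) : Morph := fun a => (σ a).reverse

/-- The exchange morphism `E : 0 → 1, 1 → 0`. -/
def Em : Morph := fun a => [!a]

/-- Generators `φ₀, φ₁` indexed by a bit: `false ↦ φ₀ (= ψ₃)`, `true ↦ φ₁ (= ψ₁)`. -/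
def phiGen : Bool → Morph := fun b => match b with | false => psi3 | true => psi1

/-- Generators of `⟨ψ₁, ψ₃⟩`: `false` encodes the index 1 (`ψ₁`),
`true` encodes the index 3 (`ψ₃`). -/
def g13 : Bool → Morph := fun b => match b with | false => psi1 | true => psi3

/-- Generators of `⟨ψ₃, ψ₈⟩`: `false ↦ ψ₃`, `true ↦ ψ₈`. -/
def g38 : Bool → Morph := fun b => match b with | false => psi3 | true => psi8

/-- Generators of `⟨ψ₄, ψ₇⟩`: `false ↦ ψ₄`, `true ↦ ψ₇`. -/
def g47 : Bool → Morph := fun b => match b with | false => psi4 | true => psi7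

/-- The Kepler matrices `K₀ = [[1,0],[1,1]]` and `K₁ = [[0,1],[1,1]]`. -/
def K : Bool → Matrix (Fin 2) (Fin 2) ℕ
  | false => !![1, 0; 1, 1]
  | true => !![0, 1; 1, 1]

/-- Let `γ ∈ ⟨ψ₁, ψ₃⟩` with `γ(0)` ending in `0` and `γ(1)`
ending in `1`, and let `Ψ` be its conjugate (by `u = γ(0)` minus its last
letter). Let `Ψ'` be the analogous conjugate of `E ∘ γ ∘ E`. Then
`Ψ' = E ∘ Ψ̃ ∘ E`, where `Ψ̃` is the time reversal of `Ψ`. -/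
private lemma flatMap_not (l : List Bool) : l.flatMap (fun b => [!b]) = l.map (fun b => !b) := by
  induction l with
  | nil => rfl
  | cons a l ih => simp [ih]

private lemma psi1_shift (x : List Bool) :
    x.flatMap psi1 ++ [false] = false :: x.flatMap (trev psi1) := by
  induction x with
  | nil => rfl
  | cons a l ih => cases a <;> simp [psi1, trev, ih]

private lemma psi3_shift (x : List Bool) :
    x.flatMap psi3 ++ [false] = false :: x.flatMap (trev psi3) := by
  induction x with
  | nil => rfl
  | cons a l ih => cases a <;> simp [psi3, trev, ih]

private lemma g13_shift (i : Bool) (x : List Bool) :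
    x.flatMap (g13 i) ++ [false] = false :: x.flatMap (trev (g13 i)) := by
  cases i
  · exact psi1_shift x
  · exact psi3_shift x

private lemma pal_inv (l : List Bool) :
    ∃ w : List Bool, w.reverse = w ∧
      ((compAll g13 l false ++ compAll g13 l true = w ++ [false, true] ∧
        compAll g13 l true ++ compAll g13 l false = w ++ [true, false]) ∨
       (compAll g13 l false ++ compAll g13 l true = w ++ [true, false] ∧
        compAll g13 l true ++ compAll g13 l false = w ++ [false, true])) := by
  induction l with
  | nil => exact ⟨[], rfl, Or.inl ⟨rfl, rfl⟩⟩
  | cons i l ih =>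
    obtain ⟨w, hpal, hd⟩ := ih
    have e : ∀ a b : Bool, compAll g13 (i :: l) a ++ compAll g13 (i :: l) b
        = (compAll g13 l a ++ compAll g13 l b).flatMap (g13 i) := by
      intro a b; rw [List.flatMap_append]; rfl
    have hpal' : (w.flatMap (g13 i) ++ [false]).reverse = w.flatMap (g13 i) ++ [false] := by
      rw [List.reverse_append, List.reverse_flatMap, hpal]
      have : (List.reverse ∘ g13 i) = trev (g13 i) := rfl
      rw [this, g13_shift]
      simp
    refine ⟨w.flatMap (g13 i) ++ [false], hpal', ?_⟩
    rcases hd with ⟨h1, h2⟩ | ⟨h1, h2⟩ <;> cases i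
    · exact Or.inr ⟨by rw [e, h1]; simp [g13, psi1], by rw [e, h2]; simp [g13, psi1]⟩
    · exact Or.inl ⟨by rw [e, h1]; simp [g13, psi3], by rw [e, h2]; simp [g13, psi3]⟩
    · exact Or.inl ⟨by rw [e, h1]; simp [g13, psi1], by rw [e, h2]; simp [g13, psi1]⟩
    · exact Or.inr ⟨by rw [e, h1]; simp [g13, psi3], by rw [e, h2]; simp [g13, psi3]⟩

private lemma EσE_eq (σ : Morph) (a : Bool) :
    M Em (M σ Em) a = (σ (!a)).map (fun b => !b) := by
  have h1 : M σ Em a = σ (!a) := by simp [M, Em]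
  rw [M, h1]
  exact flatMap_not _

private lemma concat_dropLast {l : List Bool} {b : Bool} (h : l.getLast? = some b) :
    l.dropLast ++ [b] = l := by
  have hne : l ≠ [] := by rintro rfl; simp at h
  have hgl : l.getLast hne = b :=
    Option.some_injective _ ((List.getLast?_eq_getLast hne).symm.trans h)
  rw [← hgl]; exact List.dropLast_append_getLast hne

private lemma drop_concat_pal {w x : List Bool} {c : Bool} (hpal : w.reverse = w)
    (n : ℕ) (hn : n + x.length = w.length) (hx : w.take x.length = x) :
    ((w ++ [c]).drop n).reverse = c :: x := by
  rw [List.reverse_drop, List.reverse_append, hpal]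
  have h1 : (w ++ [c]).length - n = x.length + 1 := by simp; omega
  rw [h1]
  simp [hx]

theorem conjugate_of_EγE (γ : Morph) (hmem : ∃ l : List Bool, γ = compAll g13 l)
    (h0 : (γ false).getLast? = some false) (h1 : (γ true).getLast? = some true)
    (Ψ : Morph)
    (hconj : ∀ a : Bool, γ a ++ (γ false).dropLast = (γ false).dropLast ++ Ψ a)
    (Ψ' : Morph)
    (hconj' : ∀ a : Bool,
      (M Em (M γ Em)) a ++ ((M Em (M γ Em)) false).dropLast
        = ((M Em (M γ Em)) false).dropLast ++ Ψ' a) :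
    Ψ' = M Em (M (trev Ψ) Em) := by
  obtain ⟨l, hl⟩ := hmem
  obtain ⟨w, hpal, hd⟩ := pal_inv l
  rw [← hl] at hd
  have hu0 : (γ false).dropLast ++ [false] = γ false := concat_dropLast h0
  have hv0 : (γ true).dropLast ++ [true] = γ true := concat_dropLast h1
  set u := (γ false).dropLast with hud
  set v := (γ true).dropLast with hvd
  rcases hd with ⟨hA0, hB0⟩ | ⟨hA0, hB0⟩
  · -- main case
    have hA : γ false ++ v = w ++ [false] := by
      rw [← hv0] at hA0
      have h' : (γ false ++ v) ++ [true] = (w ++ [false]) ++ [true] := by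
        simpa [List.append_assoc] using hA0
      exact (List.append_inj' h' rfl).1
    have hB : γ true ++ u = w ++ [true] := by
      rw [← hu0] at hB0
      have h' : (γ true ++ u) ++ [false] = (w ++ [true]) ++ [false] := by
        simpa [List.append_assoc] using hB0
      exact (List.append_inj' h' rfl).1
    have hlen : w.length = u.length + v.length := by
      have h := congrArg List.length hA
      rw [← hu0] at h
      simp at h
      omega
    have hwu : w.take u.length = u := by
      have h := congrArg (List.take u.length) hA
      rw [← hu0, List.append_assoc, List.take_left,
        List.take_append_of_le_length (by omega)] at h
      exact h.symm
    have hwv : w.take v.length = v := by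
      have h := congrArg (List.take v.length) hB
      rw [← hv0, List.append_assoc, List.take_left,
        List.take_append_of_le_length (by omega)] at h
      exact h.symm
    have key : ∀ b, (γ b ++ v).drop v.length = ((γ b ++ u).drop u.length).reverse := by
      intro b; cases b
      · rw [hA]
        conv_rhs => rw [← hu0, List.append_assoc, List.drop_left]
        apply List.reverse_injective
        rw [drop_concat_pal hpal v.length (by omega) hwu]
        simp
      · rw [hB, ← hv0, List.append_assoc, List.drop_left,
          drop_concat_pal hpal u.length (by omega) hwv]
        simp
    have hΨ : ∀ b, Ψ b = (γ b ++ u).drop u.length := by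
      intro b; rw [hconj b, List.drop_left]
    have hu' : ((M Em (M γ Em)) false).dropLast = v.map (fun b => !b) := by
      rw [EσE_eq γ false]
      simp only [Bool.not_false]
      rw [← hv0]
      simp
    have hΨ' : ∀ a, Ψ' a = ((γ (!a) ++ v).drop v.length).map (fun b => !b) := by
      intro a
      have h := hconj' a
      rw [EσE_eq γ a, hu'] at h
      have h2 : Ψ' a = ((γ (!a)).map (fun b => !b) ++ v.map (fun b => !b)).drop
          (v.map (fun b => !b)).length := by rw [h, List.drop_left]
      rw [h2, ← List.map_append, List.length_map, List.map_drop]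
    funext a
    rw [hΨ' a, EσE_eq (trev Ψ) a]
    congr 1
    show (γ (!a) ++ v).drop v.length = (Ψ (!a)).reverse
    rw [hΨ (!a), key (!a)]
  · -- impossible parity case
    exfalso
    rw [← hu0] at hB0
    have h' : (γ true ++ u) ++ [false] = (w ++ [false]) ++ [true] := by
      simpa [List.append_assoc] using hB0
    have := (List.append_inj' h' rfl).2
    simp at this
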